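/- Let C_s = Σ_{i=1}^{s} 1/i. For even s, if the s/2 - 1 false p-values are identically 0 and the |I| = s/2 + 1 true p-values are i.i.d. Uniform(0,1), then the probability that the stepup procedure with critical values (α/C_s)·(i/s) rejects at least one true hypothesis is at least 1 - (1 - α/(2C_s))^{s/2+1}, which tends to 1 as s → ∞. Hence the Benjamini–Yekutieli critical values do not control the FWER even under independence. -/

import Mathlib

open MeasureTheory Finset
open scoped Classical

/-- `orderStat p k` is the `k`-th smallest value (1-indexed) among `p 0, …, p (n-1)`. -/
noncomputable def orderStat {n : ℕ} (p : Fin n → ℝ) (k : ℕ) : ℝ :=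
  if h : k - 1 < n then p (Tuple.sort p ⟨k - 1, h⟩) else 0

/-- The number of rejections of the stepup procedure with critical values
`c 1 ≤ … ≤ c n` (1-indexed): the largest `j` with `p_(j) ≤ c j` (0 if none). -/
noncomputable def numReject {n : ℕ} (c : ℕ → ℝ) (p : Fin n → ℝ) : ℕ :=
  ((Finset.Icc 1 n).filter (fun j => orderStat p j ≤ c j)).sup id

/-- The indices rejected by the stepup procedure: those carrying the
`numReject c p` smallest p-values (via the sorting permutation). -/
noncomputable def rejectedSet {n : ℕ} (c : ℕ → ℝ) (p : Fin n → ℝ) : Finset (Fin n) :=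
  (Finset.univ.filter (fun j : Fin n => (j : ℕ) + 1 ≤ numReject c p)).image (Tuple.sort p)

/-- The `k`-th smallest (1-indexed) of the p-values with indices in `I`. -/
noncomputable def trueOrderStat {n : ℕ} (I : Finset (Fin n)) (p : Fin n → ℝ) (k : ℕ) : ℝ :=
  orderStat (fun j : Fin I.card => p (I.orderIsoOfFin rfl j).1) k
lemma orderStat_le {n : ℕ} (p : Fin n → ℝ) (k : ℕ) (hk1 : 1 ≤ k) (t : ℝ)
    (hcard : k ≤ ((univ : Finset (Fin n)).filter (fun i => p i ≤ t)).card) :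
    orderStat p k ≤ t := by
  have hkn : k ≤ n := le_trans hcard (le_trans (Finset.card_filter_le _ _)
    (le_of_eq (Finset.card_univ.trans (Fintype.card_fin n))))
  have h : k - 1 < n := by omega
  rw [orderStat, dif_pos h]
  by_contra hgt
  push_neg at hgt
  set σ := Tuple.sort p with hσ
  have hm : Monotone (p ∘ σ) := Tuple.monotone_sort p
  have hcardeq : ((univ : Finset (Fin n)).filter (fun i => p (σ i) ≤ t)).card
      = ((univ : Finset (Fin n)).filter (fun i => p i ≤ t)).card := by
    apply Finset.card_bij (fun i _ => σ i)
    · intro a ha; simp only [mem_filter, mem_univ, true_and] at ha ⊢; exact ha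
    · intro a _ b _ hab; exact σ.injective hab
    · intro b hb
      refine ⟨σ.symm b, ?_, by simp⟩
      simp only [mem_filter, mem_univ, true_and] at hb ⊢
      simpa using hb
  have hsub : ((univ : Finset (Fin n)).filter (fun i => p (σ i) ≤ t)) ⊆
      (univ.filter (fun i : Fin n => (i : ℕ) < k - 1)) := by
    intro i hi
    simp only [mem_filter, mem_univ, true_and] at hi ⊢
    by_contra hge
    push_neg at hge
    have hle : (⟨k - 1, h⟩ : Fin n) ≤ i := by simpa [Fin.le_def] using hge
    have := hm hle
    simp only [Function.comp_apply] at this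
    linarith
  have hle2 : (univ.filter (fun i : Fin n => (i : ℕ) < k - 1)).card ≤ k - 1 := by
    have := Finset.card_le_card_of_injOn (fun i : Fin n => (i : ℕ))
      (s := univ.filter (fun i : Fin n => (i : ℕ) < k - 1)) (t := Finset.range (k - 1))
      (by intro a ha; simp at ha; simpa using ha)
      (fun a _ b _ hab => Fin.val_injective hab)
    simpa using this
  have := (Finset.card_le_card hsub).trans hle2
  omega

lemma det_lemma {s : ℕ} (hs : Even s) (hs2 : 2 ≤ s) (α C : ℝ) (hα : 0 < α) (hC : 0 < C)
    (I : Finset (Fin s)) (hIcard : I.card = s / 2 + 1)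
    (q : Fin s → ℝ) (hfalse : ∀ i ∉ I, q i = 0)
    (i₀ : Fin s) (hi₀ : i₀ ∈ I) (hq : q i₀ ≤ α / (2 * C)) :
    1 ≤ ((rejectedSet (fun j => α / C * ((j : ℝ) / s)) q) ∩ I).card := by
  obtain ⟨m, hm⟩ := hs
  set c : ℕ → ℝ := fun j => α / C * ((j : ℝ) / s) with hc
  have hhalf : c (s / 2) = α / (2 * C) := by
    have hm1 : 1 ≤ m := by omega
    have hsm : s / 2 = m := by omega
    have hm0 : (m : ℝ) ≠ 0 := by positivity
    rw [hc]
    simp only [hsm]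
    rw [hm]
    push_cast
    field_simp
    ring
  have ht0 : 0 ≤ c (s / 2) := by rw [hhalf]; positivity
  -- at least s/2 p-values are ≤ t
  have hfiltcard : s / 2 ≤ ((univ : Finset (Fin s)).filter (fun i => q i ≤ c (s / 2))).card := by
    have hsub : insert i₀ (univ \ I) ⊆ (univ : Finset (Fin s)).filter (fun i => q i ≤ c (s / 2)) := by
      intro i hi
      simp only [mem_insert, mem_sdiff, mem_univ, true_and] at hi
      simp only [mem_filter, mem_univ, true_and]
      rcases hi with rfl | hi
      · rw [hhalf]; exact hq
      · rw [hfalse i hi]; exact ht0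
    have hcard : (insert i₀ (univ \ I)).card = s / 2 := by
      rw [Finset.card_insert_of_notMem (by simp [hi₀])]
      rw [Finset.card_sdiff_of_subset (Finset.subset_univ I)]
      simp only [Finset.card_univ, Fintype.card_fin, hIcard]
      omega
    calc s / 2 = (insert i₀ (univ \ I)).card := hcard.symm
      _ ≤ _ := Finset.card_le_card hsub
  have hos : orderStat q (s / 2) ≤ c (s / 2) := orderStat_le q (s / 2) (by omega) (c (s / 2)) hfiltcard
  have hr : s / 2 ≤ numReject c q := by
    have hmem : s / 2 ∈ (Finset.Icc 1 s).filter (fun j => orderStat q j ≤ c j) := by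
      simp only [mem_filter, mem_Icc]
      exact ⟨⟨by omega, by omega⟩, hos⟩
    exact Finset.le_sup (f := id) hmem
  -- rejectedSet has card ≥ s/2
  set σ := Tuple.sort q with hσ
  have hslt : s / 2 - 1 < s := by omega
  have hrcard : s / 2 ≤ (rejectedSet c q).card := by
    have hsub : (Finset.Iio (⟨s / 2, by omega⟩ : Fin s)).image σ ⊆ rejectedSet c q := by
      rw [rejectedSet]
      apply Finset.image_subset_image
      intro j hj
      simp only [Finset.mem_Iio, Fin.lt_def] at hj
      simp only [mem_filter, mem_univ, true_and]
      omega
    calc s / 2 = ((Finset.Iio (⟨s / 2, by omega⟩ : Fin s)).image σ).card := by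
          rw [Finset.card_image_of_injective _ σ.injective, Fin.card_Iio]
      _ ≤ _ := Finset.card_le_card hsub
  have hsdiff : ((rejectedSet c q) \ I).card ≤ s / 2 - 1 := by
    have : (rejectedSet c q) \ I ⊆ univ \ I := by
      intro x hx; simp only [mem_sdiff, mem_univ, true_and] at hx ⊢; exact hx.2
    calc ((rejectedSet c q) \ I).card ≤ (univ \ I).card := Finset.card_le_card this
      _ = s / 2 - 1 := by
          rw [Finset.card_sdiff_of_subset (Finset.subset_univ I)]
          simp only [Finset.card_univ, Fintype.card_fin, hIcard]
          omega
  have hkey := Finset.card_sdiff_add_card_inter (rejectedSet c q) I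
  omega

lemma harmonic_sum_eq (n : ℕ) : ∑ i ∈ Finset.Icc 1 n, (1:ℝ)/i = (harmonic n : ℝ) := by
  rw [harmonic_eq_sum_Icc]
  push_cast
  simp [one_div]

lemma one_le_harmonic {n : ℕ} (hn : n ≠ 0) : (1:ℚ) ≤ harmonic n := by
  induction n with
  | zero => simp at hn
  | succ m ih =>
    rcases Nat.eq_zero_or_pos m with h | h
    · subst h; simp [harmonic]
    · have := ih h.ne'
      have : (0:ℚ) ≤ (↑(m+1))⁻¹ := by positivity
      have h2 : harmonic (m+1) = harmonic m + (↑(m+1))⁻¹ := harmonic_succ m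
      nlinarith [ih h.ne']

lemma limit_part (α : ℝ) (hα : α ∈ Set.Ioo (0:ℝ) 1) :
    Filter.Tendsto (fun n : ℕ => 1 - (1 - α / (2 * ∑ i ∈ Finset.Icc 1 n, (1:ℝ)/i)) ^ (n/2+1))
      Filter.atTop (nhds 1) := by
  obtain ⟨hα0, hα1⟩ := hα
  have key : Filter.Tendsto (fun n : ℕ => (1 - α / (2 * ∑ i ∈ Finset.Icc 1 n, (1:ℝ)/i)) ^ (n/2+1))
      Filter.atTop (nhds 0) := by
    -- a n := (n/2+1) * t n, t n := α / (2 C n)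
    set a : ℕ → ℝ := fun n => ((n/2 : ℕ) + 1 : ℝ) * (α / (2 * ∑ i ∈ Finset.Icc 1 n, (1:ℝ)/i)) with ha
    have hatop : Filter.Tendsto a Filter.atTop Filter.atTop := by
      have hlo : (fun x : ℝ => 1 * Real.log x + 1) =o[Filter.atTop] (fun x : ℝ => x) := by
        have h1 : (fun x : ℝ => Real.log x) =o[Filter.atTop] (fun x : ℝ => x) :=
          Real.isLittleO_log_id_atTop
        have h2 : (fun _ : ℝ => (1:ℝ)) =o[Filter.atTop] (fun x : ℝ => x) :=
          Asymptotics.isLittleO_const_id_atTop 1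
        simpa using (h1.const_mul_left 1).add h2
      have hdiv0 : Filter.Tendsto (fun x : ℝ => (1 * Real.log x + 1) / x) Filter.atTop (nhds 0) :=
        hlo.tendsto_div_nhds_zero
      have hdiv : Filter.Tendsto (fun x : ℝ => x / (1 * Real.log x + 1)) Filter.atTop Filter.atTop := by
        have hpos : ∀ᶠ x : ℝ in Filter.atTop, (1 * Real.log x + 1) / x ∈ Set.Ioi (0:ℝ) := by
          filter_upwards [Filter.eventually_ge_atTop (1:ℝ)] with x hx
          have : (0:ℝ) ≤ Real.log x := Real.log_nonneg hx
          exact Set.mem_Ioi.mpr (div_pos (by linarith) (by linarith))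
        have := Filter.Tendsto.inv_tendsto_nhdsGT_zero
          (tendsto_nhdsWithin_of_tendsto_nhds_of_eventually_within _ hdiv0 hpos)
        apply this.congr'
        filter_upwards [Filter.eventually_ge_atTop (1:ℝ)] with x hx
        rw [Pi.inv_apply, inv_div]
      have hdivn : Filter.Tendsto (fun n : ℕ => (n:ℝ) / (1 * Real.log n + 1)) Filter.atTop Filter.atTop :=
        hdiv.comp tendsto_natCast_atTop_atTop
      have hmul : Filter.Tendsto (fun n : ℕ => (α/4) * ((n:ℝ) / (1 * Real.log n + 1)))
          Filter.atTop Filter.atTop := (Filter.tendsto_const_mul_atTop_of_pos (by positivity)).mpr hdivn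
      refine Filter.tendsto_atTop_mono' _ ?_ hmul
      filter_upwards [Filter.eventually_ge_atTop 1] with n hn
      have hC1 : (1:ℝ) ≤ ∑ i ∈ Finset.Icc 1 n, (1:ℝ)/i := by
        rw [harmonic_sum_eq]
        exact_mod_cast one_le_harmonic (by omega)
      have hC0 : (0:ℝ) < ∑ i ∈ Finset.Icc 1 n, (1:ℝ)/i := lt_of_lt_of_le one_pos hC1
      have hClog : ∑ i ∈ Finset.Icc 1 n, (1:ℝ)/i ≤ 1 + Real.log n := by
        rw [harmonic_sum_eq]; exact harmonic_le_one_add_log n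
      have hlogpos : 0 < 1 * Real.log n + 1 := by
        have : (0:ℝ) ≤ Real.log n := Real.log_nonneg (by exact_mod_cast hn)
        linarith
      have hn2 : ((n:ℝ))/2 ≤ ((n/2 : ℕ) : ℝ) + 1 := by
        have : n ≤ 2 * (n/2) + 2 := by omega
        have := (Nat.cast_le (α := ℝ)).mpr this
        push_cast at this ⊢
        linarith
      rw [ha]
      simp only
      have h1 : (α/4) * ((n:ℝ) / (1 * Real.log n + 1)) = ((n:ℝ)/2) * (α / (2 * (1 * Real.log n + 1))) := by
        field_simp; ring
      rw [h1]
      have h2 : α / (2 * (1 * Real.log n + 1)) ≤ α / (2 * ∑ i ∈ Finset.Icc 1 n, (1:ℝ)/i) := by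
        apply div_le_div_of_nonneg_left (le_of_lt hα0) (by positivity)
        linarith
      have h3 : (0:ℝ) ≤ α / (2 * (1 * Real.log n + 1)) := by positivity
      have h4 : (0:ℝ) ≤ ((n/2:ℕ):ℝ) + 1 := by positivity
      calc ((n:ℝ)/2) * (α / (2 * (1 * Real.log n + 1)))
          ≤ (((n/2:ℕ):ℝ) + 1) * (α / (2 * (1 * Real.log n + 1))) := by
            apply mul_le_mul_of_nonneg_right hn2 h3
        _ ≤ (((n/2:ℕ):ℝ) + 1) * (α / (2 * ∑ i ∈ Finset.Icc 1 n, (1:ℝ)/i)) := by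
            apply mul_le_mul_of_nonneg_left h2 h4
    have hexp : Filter.Tendsto (fun n : ℕ => Real.exp (-(a n))) Filter.atTop (nhds 0) :=
      Real.tendsto_exp_atBot.comp (Filter.tendsto_neg_atTop_atBot.comp hatop)
    apply squeeze_zero' (g := fun n => Real.exp (-(a n)))
    · filter_upwards [Filter.eventually_ge_atTop 1] with n hn
      have hC1 : (1:ℝ) ≤ ∑ i ∈ Finset.Icc 1 n, (1:ℝ)/i := by
        rw [harmonic_sum_eq]; exact_mod_cast one_le_harmonic (by omega)
      have ht1 : α / (2 * ∑ i ∈ Finset.Icc 1 n, (1:ℝ)/i) ≤ 1 := by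
        rw [div_le_one (by positivity)]
        nlinarith
      exact pow_nonneg (by linarith) _
    · filter_upwards [Filter.eventually_ge_atTop 1] with n hn
      set t := α / (2 * ∑ i ∈ Finset.Icc 1 n, (1:ℝ)/i) with htdef
      have hC1 : (1:ℝ) ≤ ∑ i ∈ Finset.Icc 1 n, (1:ℝ)/i := by
        rw [harmonic_sum_eq]; exact_mod_cast one_le_harmonic (by omega)
      have ht1 : t ≤ 1 := by
        rw [htdef, div_le_one (by positivity)]; nlinarith
      have hbase : 1 - t ≤ Real.exp (-t) := by
        have := Real.add_one_le_exp (-t)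
        linarith
      calc (1 - t) ^ (n/2+1) ≤ Real.exp (-t) ^ (n/2+1) :=
            pow_le_pow_left₀ (by linarith) hbase _
        _ = Real.exp (-(a n)) := by
            rw [← Real.exp_nat_mul, ha]
            congr 1
            push_cast
            ring
    · exact hexp
  have := Filter.Tendsto.const_sub (1:ℝ) key
  simpa using this

/-- Remark 4.1: with `s` even, `s/2 - 1` false p-values identically `0` and the
`|I| = s/2 + 1` true p-values i.i.d. `U(0,1)`, the stepup procedure with the
Benjamini–Yekutieli critical values `(α/C_s)·(i/s)` rejects at least one true
hypothesis with probability at least `1 - (1 - α/(2·C_s))^{s/2+1}`, a bound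
which tends to `1` as `s → ∞`. -/
theorem stmt11 {Ω : Type*} [MeasurableSpace Ω] (μ : Measure Ω) [IsProbabilityMeasure μ]
    {s : ℕ} (hs : Even s) (hs0 : 0 < s)
    (α : ℝ) (hα : α ∈ Set.Ioo (0 : ℝ) 1)
    (p : Fin s → Ω → ℝ) (hmeas : ∀ i, Measurable (p i))
    (I : Finset (Fin s)) (hIcard : I.card = s / 2 + 1)
    (hfalse : ∀ i ∉ I, ∀ ω, p i ω = 0)
    (hindep : ProbabilityTheory.iIndepFun
      (fun i : {x // x ∈ I} => p i.1) μ)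
    (hunif : ∀ i ∈ I, μ.map (p i) = volume.restrict (Set.Icc (0 : ℝ) 1)) :
    1 - (1 - α / (2 * ∑ i ∈ Finset.Icc 1 s, (1 : ℝ) / i)) ^ (s / 2 + 1) ≤
      (μ {ω | 1 ≤ (rejectedSet
          (fun j => α / (∑ i ∈ Finset.Icc 1 s, (1 : ℝ) / i) * ((j : ℝ) / s))
          (fun i => p i ω) ∩ I).card}).toReal ∧
    Filter.Tendsto
      (fun n : ℕ => 1 - (1 - α / (2 * ∑ i ∈ Finset.Icc 1 n, (1 : ℝ) / i)) ^ (n / 2 + 1))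
      Filter.atTop (nhds 1) := by
  refine ⟨?_, limit_part α hα⟩
  obtain ⟨hα0, hα1⟩ := hα
  have hs2 : 2 ≤ s := by obtain ⟨m, hm⟩ := hs; omega
  set C := ∑ i ∈ Finset.Icc 1 s, (1 : ℝ) / i with hCdef
  have hC1 : (1 : ℝ) ≤ C := by
    rw [hCdef, harmonic_sum_eq]; exact_mod_cast one_le_harmonic (by omega)
  have hC0 : (0 : ℝ) < C := lt_of_lt_of_le one_pos hC1
  set t := α / (2 * C) with htdef
  have ht0 : 0 < t := by positivity
  have ht1 : t ≤ 1 := by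
    rw [htdef, div_le_one (by positivity)]; nlinarith
  set E : Set Ω := ⋃ i ∈ I, {ω | p i ω ≤ t} with hEdef
  have hEmeas : MeasurableSet E := by
    apply MeasurableSet.biUnion I.countable_toSet
    intro i _
    exact measurableSet_le (hmeas i) measurable_const
  have hEsub : E ⊆ {ω | 1 ≤ (rejectedSet
      (fun j => α / C * ((j : ℝ) / s)) (fun i => p i ω) ∩ I).card} := by
    intro ω hω
    simp only [hEdef, Set.mem_iUnion, Set.mem_setOf_eq] at hω
    obtain ⟨i, hiI, hi⟩ := hω
    exact det_lemma hs hs2 α C hα0 hC0 I hIcard (fun j => p j ω)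
      (fun j hj => hfalse j hj ω) i hiI hi
  -- complement computation
  have hEc : Eᶜ = ⋂ i : {x // x ∈ I}, (p i.1) ⁻¹' (Set.Ioi t) := by
    ext ω
    simp only [hEdef, Set.mem_compl_iff, Set.mem_iUnion, Set.mem_setOf_eq, Set.mem_iInter,
      Set.mem_preimage, Set.mem_Ioi, not_exists, not_le]
    constructor
    · intro h i; exact h i.1 i.2
    · intro h i hi; exact h ⟨i, hi⟩
  have hone : ∀ i : {x // x ∈ I}, μ ((p i.1) ⁻¹' (Set.Ioi t)) = ENNReal.ofReal (1 - t) := by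
    intro i
    rw [← Measure.map_apply (hmeas i.1) measurableSet_Ioi, hunif i.1 i.2,
      Measure.restrict_apply measurableSet_Ioi]
    have : Set.Ioi t ∩ Set.Icc (0 : ℝ) 1 = Set.Ioc t 1 := by
      ext x
      simp only [Set.mem_inter_iff, Set.mem_Ioi, Set.mem_Icc, Set.mem_Ioc]
      constructor
      · rintro ⟨h1, _, h3⟩; exact ⟨h1, h3⟩
      · rintro ⟨h1, h2⟩; exact ⟨h1, le_trans ht0.le h1.le, h2⟩
    rw [this, Real.volume_Ioc]
  have hcompl : μ Eᶜ = ENNReal.ofReal ((1 - t) ^ (s / 2 + 1)) := by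
    rw [hEc, hindep.meas_iInter (fun i => ⟨Set.Ioi t, measurableSet_Ioi, rfl⟩)]
    simp_rw [hone]
    rw [Finset.prod_const, Finset.card_univ, Fintype.card_coe, hIcard]
    rw [← ENNReal.ofReal_pow (by linarith)]
  have hEval : μ E = 1 - ENNReal.ofReal ((1 - t) ^ (s / 2 + 1)) := by
    have h2 : μ E = 1 - μ Eᶜ := by
      rw [prob_compl_eq_one_sub (μ := μ) hEmeas]
      rw [ENNReal.sub_sub_cancel ENNReal.one_ne_top prob_le_one]
    rw [h2, hcompl]
  have hpow1 : (1 - t) ^ (s / 2 + 1) ≤ 1 := pow_le_one₀ (by linarith) (by linarith)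
  have hEreal : (μ E).toReal = 1 - (1 - t) ^ (s / 2 + 1) := by
    rw [hEval, ENNReal.toReal_sub_of_le (ENNReal.ofReal_le_one.mpr hpow1) ENNReal.one_ne_top]
    rw [ENNReal.toReal_one, ENNReal.toReal_ofReal (pow_nonneg (by linarith) _)]
  calc 1 - (1 - t) ^ (s / 2 + 1) = (μ E).toReal := hEreal.symm
    _ ≤ _ := ENNReal.toReal_mono (measure_ne_top μ _) (measure_mono hEsub)
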